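/- In Lehmann's example, the parametric functions possessing UMVUEs are exactly the elements of span{1, (1-θ)²}: a function g(θ) admits a UMVUE if and only if g(θ) = c₁ + c₂(1-θ)² for some constants c₁, c₂. -/

import Mathlib

open MeasureTheory

/-- The probability mass function in Lehmann's example: `X ∈ {-1,0,1,2,...}` with
`P_θ(X = -1) = θ` and `P_θ(X = k) = (1-θ)² θᵏ` for `k = 0,1,2,...`. -/
noncomputable def lehmannP (θ : ℝ) (x : ℤ) : ℝ :=
  if x = -1 then θ else if 0 ≤ x then (1 - θ) ^ 2 * θ ^ x.toNat else 0

/-- `χ` is a square-integrable unbiased estimator of zero in Lehmann's example. -/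
def IsUEZeroLehmann (χ : ℤ → ℝ) : Prop :=
  ∀ θ ∈ Set.Ioo (0 : ℝ) 1,
    Summable (fun x : ℤ => (χ x) ^ 2 * lehmannP θ x) ∧
    Summable (fun x : ℤ => χ x * lehmannP θ x) ∧
    ∑' x : ℤ, χ x * lehmannP θ x = 0

namespace Stmt13Aux

lemma lehmannP_neg_one (θ : ℝ) : lehmannP θ (-1) = θ := by simp [lehmannP]

lemma lehmannP_natCast (θ : ℝ) (n : ℕ) : lehmannP θ (n : ℤ) = (1 - θ) ^ 2 * θ ^ n := by
  have h1 : (n : ℤ) ≠ -1 := by omega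
  have h2 : (0 : ℤ) ≤ n := by omega
  simp [lehmannP, h1, h2]

lemma injective_e : Function.Injective (fun n : ℕ => (n : ℤ) - 1) := by
  intro a b h
  have : (a : ℤ) = b := by simpa using h
  exact_mod_cast this

lemma support_subset (h : ℤ → ℝ) (θ : ℝ) :
    Function.support (fun x : ℤ => h x * lehmannP θ x) ⊆
      Set.range (fun n : ℕ => (n : ℤ) - 1) := by
  intro x hx
  by_contra hr
  have hlt : x < -1 := by
    by_contra hge
    exact hr ⟨(x + 1).toNat, show ((x + 1).toNat : ℤ) - 1 = x by omega⟩
  have h1 : x ≠ -1 := by omega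
  have h2 : ¬ (0 : ℤ) ≤ x := by omega
  exact hx (by simp [lehmannP, h1, h2])

lemma bridge_summable (h : ℤ → ℝ) (θ : ℝ) :
    Summable (fun x : ℤ => h x * lehmannP θ x) ↔
      Summable (fun n : ℕ => h n * lehmannP θ n) := by
  rw [← injective_e.summable_iff (by
    intro x hx
    by_contra hne
    exact hx (support_subset h θ hne))]
  rw [← summable_nat_add_iff 1]
  apply summable_congr
  intro n
  simp only [Function.comp_apply]
  norm_num

lemma bridge_tsum (h : ℤ → ℝ) (θ : ℝ)
    (hs : Summable (fun x : ℤ => h x * lehmannP θ x)) :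
    ∑' x : ℤ, h x * lehmannP θ x = h (-1) * θ + ∑' n : ℕ, h n * lehmannP θ n := by
  have hsc : Summable ((fun x : ℤ => h x * lehmannP θ x) ∘ (fun n : ℕ => (n : ℤ) - 1)) := by
    rw [injective_e.summable_iff (fun x hx => by
      by_contra hne; exact hx (support_subset h θ hne))]
    exact hs
  rw [← injective_e.tsum_eq (support_subset h θ)]
  rw [Summable.tsum_eq_zero_add (f := fun n : ℕ => h ((n : ℤ) - 1) * lehmannP θ ((n : ℤ) - 1)) hsc]
  norm_num [lehmannP_neg_one]


-- Reduce the ℕ-part to plain power series in θ.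
lemma nat_summable_iff (h : ℤ → ℝ) {θ : ℝ} (hθ : θ ∈ Set.Ioo (0:ℝ) 1) :
    Summable (fun n : ℕ => h n * lehmannP θ n) ↔ Summable (fun n : ℕ => h n * θ ^ n) := by
  have hne : ((1 - θ) ^ 2 : ℝ) ≠ 0 := by
    have h2 := hθ.2
    have : (1 : ℝ) - θ ≠ 0 := by intro h; linarith
    positivity
  rw [show (fun n : ℕ => h n * lehmannP θ n) = fun n : ℕ => (1 - θ) ^ 2 * (h n * θ ^ n) by
    funext n; rw [lehmannP_natCast]; ring]
  exact summable_mul_left_iff hne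

lemma nat_tsum_eq (h : ℤ → ℝ) {θ : ℝ} (hθ : θ ∈ Set.Ioo (0:ℝ) 1) :
    ∑' n : ℕ, h n * lehmannP θ n = (1 - θ) ^ 2 * ∑' n : ℕ, h n * θ ^ n := by
  rw [← tsum_mul_left]
  apply tsum_congr
  intro n
  rw [lehmannP_natCast]
  ring

lemma master_summable (h : ℤ → ℝ) {θ : ℝ} (hθ : θ ∈ Set.Ioo (0:ℝ) 1) :
    Summable (fun x : ℤ => h x * lehmannP θ x) ↔ Summable (fun n : ℕ => h n * θ ^ n) := by
  rw [bridge_summable, nat_summable_iff h hθ]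

lemma master_tsum (h : ℤ → ℝ) {θ : ℝ} (hθ : θ ∈ Set.Ioo (0:ℝ) 1)
    (hs : Summable (fun x : ℤ => h x * lehmannP θ x)) :
    ∑' x : ℤ, h x * lehmannP θ x = h (-1) * θ + (1 - θ) ^ 2 * ∑' n : ℕ, h n * θ ^ n := by
  rw [bridge_tsum h θ hs, nat_tsum_eq h hθ]

/-- Coefficients of `c·θ + (1-θ)² Σ h_k θ^k` as a power series. -/
noncomputable def coeffA (h : ℕ → ℝ) (c : ℝ) : ℕ → ℝ
  | 0 => h 0
  | 1 => c + h 1 - 2 * h 0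
  | (k+2) => h (k+2) - 2 * h (k+1) + h k

lemma expand (h : ℕ → ℝ) (c θ : ℝ) (hs : Summable fun k => h k * θ ^ k) :
    Summable (fun k => coeffA h c k * θ ^ k) ∧
      ∑' k, coeffA h c k * θ ^ k = c * θ + (1 - θ) ^ 2 * ∑' k, h k * θ ^ k := by
  classical
  set f₂ : ℕ → ℝ := fun k => Nat.rec 0 (fun k _ => -2 * θ * (h k * θ ^ k)) k with hf₂def
  set f₃ : ℕ → ℝ := fun k =>
    Nat.rec 0 (fun k _ => Nat.rec 0 (fun k _ => θ ^ 2 * (h k * θ ^ k)) k) k with hf₃def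
  set f₄ : ℕ → ℝ := fun k => if k = 1 then c * θ else 0 with hf₄def
  have hs₂ : Summable f₂ := by
    rw [← summable_nat_add_iff 1]
    exact (hs.mul_left (-2 * θ))
  have hs₃ : Summable f₃ := by
    rw [← summable_nat_add_iff 2]
    exact (hs.mul_left (θ ^ 2))
  have hs₄ : Summable f₄ := by
    apply summable_of_ne_finset_zero (s := {1})
    intro b hb
    simp only [Finset.mem_singleton] at hb
    simp [hf₄def, hb]
  have hfe : (fun k => coeffA h c k * θ ^ k) = fun k => h k * θ ^ k + f₂ k + f₃ k + f₄ k := by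
    funext k
    match k with
    | 0 => simp [coeffA, hf₂def, hf₃def, hf₄def]
    | 1 => simp [coeffA, hf₂def, hf₃def, hf₄def]; ring
    | (k+2) => simp [coeffA, hf₂def, hf₃def, hf₄def]; ring
  have hsum : Summable (fun k => coeffA h c k * θ ^ k) := by
    rw [hfe]; exact ((hs.add hs₂).add hs₃).add hs₄
  refine ⟨hsum, ?_⟩
  have ht₂ : ∑' k, f₂ k = -2 * θ * ∑' k, h k * θ ^ k := by
    rw [Summable.tsum_eq_zero_add hs₂]
    simp only [hf₂def]
    rw [tsum_mul_left]
    simp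
  have hs₃' : Summable (fun k => f₃ (k + 1)) := (summable_nat_add_iff 1).2 hs₃
  have ht₃ : ∑' k, f₃ k = θ ^ 2 * ∑' k, h k * θ ^ k := by
    rw [Summable.tsum_eq_zero_add hs₃, Summable.tsum_eq_zero_add hs₃']
    simp only [hf₃def]
    rw [tsum_mul_left]
    simp
  have ht₄ : ∑' k, f₄ k = c * θ := tsum_ite_eq 1 (fun _ => c * θ)
  rw [hfe, Summable.tsum_add ((hs.add hs₂).add hs₃) hs₄, Summable.tsum_add (hs.add hs₂) hs₃, Summable.tsum_add hs hs₂,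
    ht₂, ht₃, ht₄]
  ring


lemma summable_shift {b : ℕ → ℝ} {θ : ℝ} (hθ : θ ≠ 0)
    (hb : Summable fun k => b k * θ ^ k) : Summable fun k => b (k + 1) * θ ^ k := by
  have h1 : Summable fun k => b (k + 1) * θ ^ (k + 1) := (summable_nat_add_iff 1).2 hb
  have h2 := h1.mul_left θ⁻¹
  refine h2.congr fun k => ?_
  field_simp
  ring

lemma head_eq_zero {b : ℕ → ℝ}
    (hs : ∀ θ ∈ Set.Ioo (0:ℝ) 1, Summable fun k => b k * θ ^ k)
    (hz : ∀ θ ∈ Set.Ioo (0:ℝ) 1, ∑' k, b k * θ ^ k = 0) : b 0 = 0 := by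
  have hhalf : (1/2 : ℝ) ∈ Set.Ioo (0:ℝ) 1 := by norm_num
  have hCsum : Summable fun k => |b (k + 1)| * (1/2 : ℝ) ^ k := by
    have := (summable_shift (by norm_num) (hs _ hhalf)).abs
    refine this.congr fun k => ?_
    rw [abs_mul, abs_pow, abs_of_pos (by norm_num : (0:ℝ) < 1/2)]
  set C : ℝ := ∑' k, |b (k + 1)| * (1/2 : ℝ) ^ k with hC
  have hC0 : 0 ≤ C := tsum_nonneg fun k => by positivity
  have key : ∀ θ : ℝ, θ ∈ Set.Ioo (0:ℝ) 1 → θ ≤ 1/2 → |b 0| ≤ θ * C := by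
    intro θ hθ hθ2
    have hsθ := hs θ hθ
    have hshift := summable_shift (ne_of_gt hθ.1) hsθ
    have h1 : (0 : ℝ) = b 0 + ∑' k, b (k + 1) * θ ^ (k + 1) := by
      rw [← hz θ hθ, Summable.tsum_eq_zero_add hsθ]
      norm_num
    have h2 : ∑' k, b (k + 1) * θ ^ (k + 1) = θ * ∑' k, b (k + 1) * θ ^ k := by
      rw [← tsum_mul_left]
      exact tsum_congr fun k => by ring
    have hb0 : b 0 = -(θ * ∑' k, b (k + 1) * θ ^ k) := by
      rw [h2] at h1; linarith
    rw [hb0, abs_neg, abs_mul, abs_of_pos hθ.1]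
    apply mul_le_mul_of_nonneg_left _ (le_of_lt hθ.1)
    have step1 : |∑' k, b (k + 1) * θ ^ k| ≤ ∑' k, |b (k + 1) * θ ^ k| := by
      have hn : Summable fun k => ‖b (k + 1) * θ ^ k‖ := by
        simpa only [Real.norm_eq_abs] using hshift.abs
      have := norm_tsum_le_tsum_norm hn
      simpa only [Real.norm_eq_abs] using this
    have step2 : ∑' k, |b (k + 1) * θ ^ k| ≤ C := by
      apply Summable.tsum_le_tsum _ hshift.abs hCsum
      intro k
      rw [abs_mul, abs_pow, abs_of_pos hθ.1]
      apply mul_le_mul_of_nonneg_left _ (abs_nonneg _)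
      exact pow_le_pow_left₀ (le_of_lt hθ.1) hθ2 k
    linarith
  have habs : |b 0| ≤ 0 := by
    apply le_of_forall_pos_le_add
    intro ε hε
    rw [zero_add]
    set θ := min (1/2 : ℝ) (ε / (C + 1)) with hθdef
    have hθpos : 0 < θ := lt_min (by norm_num) (by positivity)
    have hθlt : θ < 1 := lt_of_le_of_lt (min_le_left _ _) (by norm_num)
    have := key θ ⟨hθpos, hθlt⟩ (min_le_left _ _)
    have h2 : θ * C ≤ (ε / (C + 1)) * C :=
      mul_le_mul_of_nonneg_right (min_le_right _ _) hC0
    have h3 : (ε / (C + 1)) * C ≤ ε := by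
      rw [div_mul_eq_mul_div, div_le_iff₀ (by linarith)]
      nlinarith
    linarith
  have := abs_nonneg (b 0)
  have : |b 0| = 0 := le_antisymm habs this
  exact abs_eq_zero.mp this

lemma tail_zero {b : ℕ → ℝ}
    (hs : ∀ θ ∈ Set.Ioo (0:ℝ) 1, Summable fun k => b k * θ ^ k)
    (hz : ∀ θ ∈ Set.Ioo (0:ℝ) 1, ∑' k, b k * θ ^ k = 0) :
    ∀ θ ∈ Set.Ioo (0:ℝ) 1, ∑' k, b (k + 1) * θ ^ k = 0 := by
  intro θ hθ
  have hb0 : b 0 = 0 := head_eq_zero hs hz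
  have hsθ := hs θ hθ
  have h1 : (0 : ℝ) = b 0 + ∑' k, b (k + 1) * θ ^ (k + 1) := by
    rw [← hz θ hθ, Summable.tsum_eq_zero_add hsθ]
    norm_num
  have h2 : ∑' k, b (k + 1) * θ ^ (k + 1) = θ * ∑' k, b (k + 1) * θ ^ k := by
    rw [← tsum_mul_left]
    exact tsum_congr fun k => by ring
  rw [hb0, h2, zero_add] at h1
  have := mul_eq_zero.mp h1.symm
  rcases this with h | h
  · exact absurd h (ne_of_gt hθ.1)
  · exact h

lemma coeff_zero (a : ℕ → ℝ)
    (hs : ∀ θ ∈ Set.Ioo (0:ℝ) 1, Summable fun k => a k * θ ^ k)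
    (hz : ∀ θ ∈ Set.Ioo (0:ℝ) 1, ∑' k, a k * θ ^ k = 0) : ∀ n, a n = 0 := by
  have H : ∀ n,
      (∀ θ ∈ Set.Ioo (0:ℝ) 1, Summable fun k => a (k + n) * θ ^ k) ∧
      (∀ θ ∈ Set.Ioo (0:ℝ) 1, ∑' k, a (k + n) * θ ^ k = 0) := by
    intro n
    induction n with
    | zero => exact ⟨fun θ hθ => by simpa using hs θ hθ, fun θ hθ => by simpa using hz θ hθ⟩
    | succ n ih =>
      have hidx : ∀ k, k + 1 + n = k + (n + 1) := fun k => by omega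
      constructor
      · intro θ hθ
        have := summable_shift (ne_of_gt hθ.1) (ih.1 θ hθ)
        simpa only [hidx] using this
      · intro θ hθ
        have := tail_zero ih.1 ih.2 θ hθ
        simpa only [hidx] using this
  intro n
  have := head_eq_zero (H n).1 (H n).2
  simpa using this


lemma lehmannP_nonneg {θ : ℝ} (hθ : θ ∈ Set.Ioo (0:ℝ) 1) (x : ℤ) : 0 ≤ lehmannP θ x := by
  have h1 := hθ.1; have h2 := hθ.2
  unfold lehmannP
  split
  · linarith
  split
  · positivity
  · exact le_refl 0

lemma lehmannP_zero (θ : ℝ) : lehmannP θ 0 = (1 - θ) ^ 2 := by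
  simpa using lehmannP_natCast θ 0

lemma summable_lehmannP {θ : ℝ} (hθ : θ ∈ Set.Ioo (0:ℝ) 1) :
    Summable (fun x : ℤ => lehmannP θ x) := by
  have h1 : Summable (fun n : ℕ => (1:ℝ) * θ ^ n) := by
    simpa using summable_geometric_of_lt_one (le_of_lt hθ.1) hθ.2
  have := (master_summable (fun _ => (1:ℝ)) hθ).mpr h1
  simpa using this

lemma tsum_lehmannP {θ : ℝ} (hθ : θ ∈ Set.Ioo (0:ℝ) 1) :
    ∑' x : ℤ, lehmannP θ x = 1 := by
  have hne : (1:ℝ) - θ ≠ 0 := by have := hθ.2; intro h; linarith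
  have hs := summable_lehmannP hθ
  have hs' : Summable (fun x : ℤ => (1:ℝ) * lehmannP θ x) := by simpa using hs
  have := master_tsum (fun _ => (1:ℝ)) hθ hs'
  have hgeo : ∑' n : ℕ, (1:ℝ) * θ ^ n = (1 - θ)⁻¹ := by
    simpa using tsum_geometric_of_lt_one (le_of_lt hθ.1) hθ.2
  have heq : ∑' x : ℤ, lehmannP θ x = ∑' x : ℤ, (1:ℝ) * lehmannP θ x :=
    tsum_congr fun x => by ring
  rw [heq, this, hgeo]
  field_simp
  ring


lemma norm_lt_one {θ : ℝ} (hθ : θ ∈ Set.Ioo (0:ℝ) 1) : ‖θ‖ < 1 := by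
  rw [Real.norm_eq_abs, abs_of_pos hθ.1]; exact hθ.2

lemma sub_ne {θ : ℝ} (hθ : θ ∈ Set.Ioo (0:ℝ) 1) : (1:ℝ) - θ ≠ 0 := by
  have := hθ.2; intro h; linarith

/-- The estimator `χ(x) = x` is an unbiased estimator of zero. -/
lemma chi_UE : IsUEZeroLehmann (fun x : ℤ => (x : ℝ)) := by
  intro θ hθ
  have hn := norm_lt_one hθ
  refine ⟨?_, ?_, ?_⟩
  · apply (master_summable (fun x : ℤ => ((x : ℝ)) ^ 2) hθ).mpr
    have := summable_pow_mul_geometric_of_norm_lt_one 2 hn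
    refine this.congr fun n => ?_
    push_cast
    ring
  · apply (master_summable (fun x : ℤ => ((x : ℝ))) hθ).mpr
    have := summable_pow_mul_geometric_of_norm_lt_one 1 hn
    refine this.congr fun n => ?_
    push_cast
    ring
  · have hs : Summable (fun x : ℤ => (x : ℝ) * lehmannP θ x) := by
      apply (master_summable (fun x : ℤ => ((x : ℝ))) hθ).mpr
      have := summable_pow_mul_geometric_of_norm_lt_one 1 hn
      refine this.congr fun n => ?_
      push_cast
      ring
    rw [master_tsum (fun x : ℤ => ((x : ℝ))) hθ hs]
    have hgeo : ∑' n : ℕ, (((n : ℤ) : ℝ)) * θ ^ n = θ / (1 - θ) ^ 2 := by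
      rw [← tsum_coe_mul_geometric_of_norm_lt_one hn]
      exact tsum_congr fun n => by push_cast; ring
    rw [hgeo]
    have hne : ((1:ℝ) - θ) ^ 2 ≠ 0 := pow_ne_zero 2 (sub_ne hθ)
    field_simp
    rw [div_self (sub_ne hθ)]; push_cast; ring

/-- Cauchy–Schwarz-type summability for products. -/
lemma summable_mul_of_sq {u v : ℤ → ℝ} {θ : ℝ} (hθ : θ ∈ Set.Ioo (0:ℝ) 1)
    (hu : Summable fun x => u x ^ 2 * lehmannP θ x)
    (hv : Summable fun x => v x ^ 2 * lehmannP θ x) :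
    Summable fun x => u x * v x * lehmannP θ x := by
  apply Summable.of_abs
  have hmaj : Summable fun x : ℤ =>
      (1/2 : ℝ) * (u x ^ 2 * lehmannP θ x + v x ^ 2 * lehmannP θ x) :=
    (hu.add hv).mul_left _
  apply Summable.of_nonneg_of_le (fun x => abs_nonneg _) _ hmaj
  intro x
  have hP := lehmannP_nonneg hθ x
  rw [abs_mul, abs_of_nonneg hP, abs_mul]
  have h1 : |u x| * |v x| * lehmannP θ x ≤ (1/2) * (u x ^ 2 + v x ^ 2) * lehmannP θ x := by
    apply mul_le_mul_of_nonneg_right _ hP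
    nlinarith [sq_nonneg (|u x| - |v x|), sq_abs (u x), sq_abs (v x)]
  calc |u x| * |v x| * lehmannP θ x ≤ (1/2) * (u x ^ 2 + v x ^ 2) * lehmannP θ x := h1
    _ = (1/2) * (u x ^ 2 * lehmannP θ x + v x ^ 2 * lehmannP θ x) := by ring

/-- Any unbiased estimator of zero vanishes at `0`. -/
lemma chi_zero_at_zero (χ : ℤ → ℝ) (hχ : IsUEZeroLehmann χ) : χ 0 = 0 := by
  have hsnat : ∀ θ ∈ Set.Ioo (0:ℝ) 1, Summable fun n : ℕ => χ n * θ ^ n := by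
    intro θ hθ
    exact (master_summable χ hθ).mp (hχ θ hθ).2.1
  have hrel : ∀ θ ∈ Set.Ioo (0:ℝ) 1,
      χ (-1) * θ + (1 - θ) ^ 2 * ∑' n : ℕ, χ n * θ ^ n = 0 := by
    intro θ hθ
    rw [← master_tsum χ hθ (hχ θ hθ).2.1]
    exact (hχ θ hθ).2.2
  have hA := coeff_zero (coeffA (fun n : ℕ => χ n) (χ (-1)))
    (fun θ hθ => (expand _ _ θ (hsnat θ hθ)).1)
    (fun θ hθ => by rw [(expand _ _ θ (hsnat θ hθ)).2]; exact hrel θ hθ)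
  have := hA 0
  simpa [coeffA] using this


/-- Decomposition of a two-valued step function against `lehmannP`. -/
lemma step_summable_tsum {θ : ℝ} (hθ : θ ∈ Set.Ioo (0:ℝ) 1) (a b : ℝ) :
    Summable (fun x : ℤ => (if x = 0 then b else a) * lehmannP θ x) ∧
      ∑' x : ℤ, (if x = 0 then b else a) * lehmannP θ x = a + (b - a) * (1 - θ) ^ 2 := by
  classical
  have hfe : (fun x : ℤ => (if x = 0 then b else a) * lehmannP θ x)
      = fun x : ℤ => a * lehmannP θ x + (if x = 0 then (b - a) * lehmannP θ 0 else 0) := by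
    funext x
    by_cases hx : x = 0
    · subst hx; simp; ring
    · simp [hx]
  have hs1 : Summable (fun x : ℤ => a * lehmannP θ x) := (summable_lehmannP hθ).mul_left a
  have hs2 : Summable (fun x : ℤ => if x = 0 then (b - a) * lehmannP θ 0 else 0) := by
    apply summable_of_ne_finset_zero (s := {(0:ℤ)})
    intro x hx
    simp only [Finset.mem_singleton] at hx
    simp [hx]
  constructor
  · rw [hfe]; exact hs1.add hs2
  · rw [hfe, Summable.tsum_add hs1 hs2, tsum_mul_left, tsum_lehmannP hθ,
      tsum_ite_eq (0:ℤ) (fun _ => (b - a) * lehmannP θ 0), lehmannP_zero]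
    ring

end Stmt13Aux

open Stmt13Aux in
theorem stmt13 (G : ℝ → ℝ) :
    (∃ g : ℤ → ℝ,
        (∀ θ ∈ Set.Ioo (0 : ℝ) 1, Summable (fun x : ℤ => (g x) ^ 2 * lehmannP θ x)) ∧
        (∀ χ : ℤ → ℝ, IsUEZeroLehmann χ →
          ∀ θ ∈ Set.Ioo (0 : ℝ) 1, ∑' x : ℤ, g x * χ x * lehmannP θ x = 0) ∧
        (∀ θ ∈ Set.Ioo (0 : ℝ) 1,
          Summable (fun x : ℤ => g x * lehmannP θ x) ∧
          ∑' x : ℤ, g x * lehmannP θ x = G θ)) ↔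
      ∃ c₁ c₂ : ℝ, ∀ θ ∈ Set.Ioo (0 : ℝ) 1, G θ = c₁ + c₂ * (1 - θ) ^ 2 := by
  constructor
  · rintro ⟨g, hg1, hg2, hg3⟩
    refine ⟨g 1, g 0 - g 1, ?_⟩
    have hχ := chi_UE
    set hseq : ℕ → ℝ := fun n => g (n : ℤ) * (n : ℝ) with hseqdef
    set c : ℝ := -g (-1) with hcdef
    have hsums : ∀ θ ∈ Set.Ioo (0:ℝ) 1,
        Summable fun x : ℤ => g x * (x : ℝ) * lehmannP θ x := by
      intro θ hθ
      exact summable_mul_of_sq hθ (hg1 θ hθ) ((hχ θ hθ).1)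
    have hsnat : ∀ θ ∈ Set.Ioo (0:ℝ) 1, Summable fun k : ℕ => hseq k * θ ^ k := by
      intro θ hθ
      have := (master_summable (fun x : ℤ => g x * (x : ℝ)) hθ).mp (hsums θ hθ)
      refine this.congr fun n => ?_
      simp [hseqdef]
    have hrel : ∀ θ ∈ Set.Ioo (0:ℝ) 1, c * θ + (1 - θ) ^ 2 * ∑' k, hseq k * θ ^ k = 0 := by
      intro θ hθ
      have h0 := hg2 _ hχ θ hθ
      rw [master_tsum (fun x : ℤ => g x * (x : ℝ)) hθ (hsums θ hθ)] at h0
      have hts : ∑' n : ℕ, g ((n : ℕ) : ℤ) * (((n : ℕ) : ℤ) : ℝ) * θ ^ n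
          = ∑' k, hseq k * θ ^ k := tsum_congr fun n => by simp [hseqdef]
      rw [hts] at h0
      have hm1 : g (-1) * ((-1 : ℤ) : ℝ) = c := by simp [hcdef]
      rw [hcdef]
      push_cast at h0 ⊢
      linarith
    have hA := coeff_zero (coeffA hseq c)
      (fun θ hθ => (expand hseq c θ (hsnat θ hθ)).1)
      (fun θ hθ => by rw [(expand hseq c θ (hsnat θ hθ)).2]; exact hrel θ hθ)
    have hg1m : g 1 = g (-1) := by
      have := hA 1
      simp [coeffA, hseqdef, hcdef] at this
      linarith
    have hdiff : ∀ k : ℕ, hseq (k + 1) - hseq k = g 1 := by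
      intro k
      induction k with
      | zero => simp [hseqdef]
      | succ k ih =>
        have := hA (k + 2)
        simp only [coeffA] at this
        linarith
    have hlin : ∀ k : ℕ, hseq k = (k : ℝ) * g 1 := by
      intro k
      induction k with
      | zero => simp [hseqdef]
      | succ k ih =>
        have := hdiff k
        push_cast
        linarith
    have hgk : ∀ n : ℕ, g ((n : ℤ) + 1) = g 1 := by
      intro n
      have h1 := hlin (n + 1)
      simp only [hseqdef] at h1
      push_cast at h1
      have hne : ((n : ℝ) + 1) ≠ 0 := by positivity
      have h2 : g ((n : ℤ) + 1) * ((n : ℝ) + 1) = g 1 * ((n : ℝ) + 1) := by linarith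
      exact mul_right_cancel₀ hne h2
    intro θ hθ
    have hsg : Summable fun n : ℕ => g ((n : ℕ) : ℤ) * θ ^ n :=
      (master_summable g hθ).mp (hg3 θ hθ).1
    have hGθ : G θ = g (-1) * θ + (1 - θ) ^ 2 * ∑' n : ℕ, g ((n : ℕ) : ℤ) * θ ^ n := by
      rw [← (hg3 θ hθ).2, master_tsum g hθ (hg3 θ hθ).1]
    have htail : ∑' n : ℕ, g ((n : ℕ) : ℤ) * θ ^ n = g 0 + g 1 * θ * (1 - θ)⁻¹ := by
      rw [Summable.tsum_eq_zero_add hsg]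
      have hterm : ∀ n : ℕ, g (((n + 1 : ℕ)) : ℤ) * θ ^ (n + 1) = (g 1 * θ) * θ ^ n := by
        intro n
        have hcast : (((n + 1 : ℕ)) : ℤ) = (n : ℤ) + 1 := by push_cast; ring
        rw [hcast, hgk n]
        ring
      rw [tsum_congr hterm, tsum_mul_left, tsum_geometric_of_lt_one (le_of_lt hθ.1) hθ.2]
      norm_num
    rw [hGθ, htail, ← hg1m]
    have hne := sub_ne hθ
    field_simp
    ring
  · rintro ⟨c₁, c₂, hG⟩
    refine ⟨fun x : ℤ => if x = 0 then c₁ + c₂ else c₁, ?_, ?_, ?_⟩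
    · intro θ hθ
      have := (step_summable_tsum hθ (c₁ ^ 2) ((c₁ + c₂) ^ 2)).1
      refine this.congr fun x => ?_
      by_cases hx : x = 0 <;> simp [hx]
    · intro χ hχ θ hθ
      have hχ0 := chi_zero_at_zero χ hχ
      have hfe : (fun x : ℤ => (if x = 0 then c₁ + c₂ else c₁) * χ x * lehmannP θ x)
          = fun x : ℤ => c₁ * (χ x * lehmannP θ x) := by
        funext x
        by_cases hx : x = 0
        · subst hx; simp [hχ0]
        · simp [hx]; ring
      rw [hfe, tsum_mul_left, (hχ θ hθ).2.2, mul_zero]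
    · intro θ hθ
      refine ⟨(step_summable_tsum hθ c₁ (c₁ + c₂)).1, ?_⟩
      rw [(step_summable_tsum hθ c₁ (c₁ + c₂)).2, hG θ hθ]
      ring
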